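/- A non-binary observable M with n ≥ 3 pairwise distinct effects cannot be unambiguously labeled in a single shot: there is no quantum 1-tester {T_1,…,T_{n!}, T_?} with at least one T_π ≠ 0 satisfying the no-error conditions Tr[Φ_{π'} T_π] = 0 for all π ≠ π'. -/

import Mathlib

open Matrix Finset Equiv
open scoped ComplexOrder

/-- A density operator: positive semidefinite with unit trace. -/
def IsDensity {d : ℕ} (ρ : Matrix (Fin d) (Fin d) ℂ) : Prop :=
  ρ.PosSemidef ∧ ρ.trace = 1

private lemma psd_trace_nonneg {d : ℕ} {A : Matrix (Fin d) (Fin d) ℂ}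
    (hA : A.PosSemidef) : 0 ≤ A.trace := by
  rw [Matrix.trace]
  refine Finset.sum_nonneg fun i _ => ?_
  have := hA.diag_nonneg (i := i)
  simpa [Matrix.mulVec_single, Matrix.diag, dotProduct, Pi.single_apply, apply_ite] using this

open scoped MatrixOrder in
private lemma psd_trace_mul_nonneg {d : ℕ} {A B : Matrix (Fin d) (Fin d) ℂ}
    (hA : A.PosSemidef) (hB : B.PosSemidef) : 0 ≤ (A * B).trace := by
  obtain ⟨C, hC⟩ := CStarAlgebra.nonneg_iff_eq_star_mul_self.mp hB.nonneg
  rw [star_eq_conjTranspose] at hC; subst hC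
  have h1 : (A * (Cᴴ * C)).trace = (C * A * Cᴴ).trace := by
    rw [← mul_assoc, Matrix.trace_mul_comm, mul_assoc, ← mul_assoc]
  rw [h1]
  exact psd_trace_nonneg (hA.mul_mul_conjTranspose_same C)

open scoped MatrixOrder in
private lemma psd_eq_zero_of_trace_eq_zero {d : ℕ} {A : Matrix (Fin d) (Fin d) ℂ}
    (hA : A.PosSemidef) (h : A.trace = 0) : A = 0 := by
  obtain ⟨C, hC⟩ := CStarAlgebra.nonneg_iff_eq_star_mul_self.mp hA.nonneg
  rw [star_eq_conjTranspose] at hC; subst hC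
  suffices hC : C = 0 by simp [hC]
  have htr : ∑ i, ∑ j, star (C j i) * C j i = 0 := by
    simpa [Matrix.trace, Matrix.diag, Matrix.mul_apply, Matrix.conjTranspose_apply] using h
  have hall : ∀ i ∈ Finset.univ, ∑ j, star (C j i) * C j i = 0 :=
    (Finset.sum_eq_zero_iff_of_nonneg fun i _ =>
      Finset.sum_nonneg fun j _ => star_mul_self_nonneg _).mp htr
  ext j i
  have := (Finset.sum_eq_zero_iff_of_nonneg
    (fun j _ => star_mul_self_nonneg (C j i))).mp (hall i (Finset.mem_univ i)) j
    (Finset.mem_univ j)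
  have hz : (Complex.normSq (C j i) : ℂ) = 0 := by
    rw [Complex.normSq_eq_conj_mul_self]; exact this
  have : Complex.normSq (C j i) = 0 := by exact_mod_cast hz
  simpa using Complex.normSq_eq_zero.mp this

/-- A non-binary observable (`n ≥ 3` pairwise distinct nonzero effects) cannot be
unambiguously labeled in a single shot: for any 1-tester
`T_α = ∑ k H_k^{(α)} ⊗ |k⟩⟨k|` (with `α` ranging over the `n!` conclusive outcomes
`some π` and the inconclusive outcome `none`, and `∑_α H_k^{(α)} = ρ` a density
operator) satisfying the no-error conditions `Tr[Φ_{π'} T_π] = 0` for all `π' ≠ π`,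
every conclusive tester element vanishes: `T_π = 0`, i.e. `H k (some π) = 0`. -/
theorem no_single_shot_unambiguous_labeling
    {d n : ℕ} (hn : 3 ≤ n)
    (M : Fin n → Matrix (Fin d) (Fin d) ℂ)
    (hM : ∀ j, (M j).PosSemidef) (hMsum : ∑ j, M j = 1)
    (hMne : ∀ j, M j ≠ 0) (hMdist : ∀ j j', j ≠ j' → M j ≠ M j')
    (ρ : Matrix (Fin d) (Fin d) ℂ) (hρ : IsDensity ρ)
    (H : Fin n → Option (Equiv.Perm (Fin n)) → Matrix (Fin d) (Fin d) ℂ)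
    (hH : ∀ k α, (H k α).PosSemidef)
    (hHsum : ∀ k, ∑ α : Option (Equiv.Perm (Fin n)), H k α = ρ)
    (hNoError : ∀ π π' : Equiv.Perm (Fin n), π ≠ π' →
      ∑ k, ((M k)ᵀ * H (π' k) (some π)).trace = 0) :
    ∀ (π : Equiv.Perm (Fin n)) (k : Fin n), H k (some π) = 0 := by
  intro π k
  -- each term in the no-error sum is zero
  have hterm : ∀ π' : Equiv.Perm (Fin n), π ≠ π' → ∀ m : Fin n,
      ((M m)ᵀ * H (π' m) (some π)).trace = 0 := by
    intro π' hne m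
    have hnn : ∀ j ∈ Finset.univ, (0 : ℂ) ≤ ((M j)ᵀ * H (π' j) (some π)).trace :=
      fun j _ => psd_trace_mul_nonneg (hM j).transpose (hH _ _)
    exact (Finset.sum_eq_zero_iff_of_nonneg hnn).mp (hNoError π π' hne) m (Finset.mem_univ m)
  -- for every m there is π' ≠ π with π' m = k
  have key : ∀ m : Fin n, ((M m)ᵀ * H k (some π)).trace = 0 := by
    intro m
    set m0 := π⁻¹ k with hm0
    have hπm0 : π m0 = k := by simp [hm0]
    by_cases hmm : m = m0
    · -- need a swap fixing m0
      have hcard : 1 < (Finset.univ.erase m0).card := by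
        rw [Finset.card_erase_of_mem (Finset.mem_univ _), Finset.card_univ, Fintype.card_fin]
        omega
      obtain ⟨a, ha, b, hb, hab⟩ := Finset.one_lt_card.mp hcard
      have ha' : a ≠ m0 := Finset.ne_of_mem_erase ha
      have hb' : b ≠ m0 := Finset.ne_of_mem_erase hb
      set π' := π * Equiv.swap a b with hπ'
      have hπ'm : π' m = k := by
        simp [hπ', hmm, Equiv.swap_apply_of_ne_of_ne ha'.symm hb'.symm, hπm0]
      have hne : π ≠ π' := by
        intro hEq
        have : π a = π' a := by rw [hEq]
        simp [hπ', Equiv.swap_apply_left] at this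
        exact hab this
      have := hterm π' hne m
      rwa [hπ'm] at this
    · set π' := π * Equiv.swap m m0 with hπ'
      have hπ'm : π' m = k := by simp [hπ', Equiv.swap_apply_left, hπm0]
      have hne : π ≠ π' := by
        intro hEq
        have : π m = π' m := by rw [hEq]
        rw [hπ'm] at this
        exact hmm (π.injective (this.trans hπm0.symm))
      have := hterm π' hne m
      rwa [hπ'm] at this
  -- sum over m gives trace of H k (some π)
  have htr : (H k (some π)).trace = 0 := by
    have hsum : ∑ m, ((M m)ᵀ * H k (some π)).trace = 0 :=
      Finset.sum_eq_zero fun m _ => key m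
    have : (∑ m, (M m)ᵀ * H k (some π)).trace = 0 := by
      rw [Matrix.trace_sum] at *
      exact hsum
    rwa [← Finset.sum_mul, ← Matrix.transpose_sum, hMsum, Matrix.transpose_one, one_mul] at this
  exact psd_eq_zero_of_trace_eq_zero (hH k (some π)) htr
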